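/- arXiv:2111.04543 — 2 statements merged into one kernel-verified Lean document; each statement's English description precedes it below -/
import Mathlib

section
/- For every positive integer n, the tree-independence number of the complete bipartite graph K_{n,n} equals n. -/
open SimpleGraph

/-- `S` is an independent set in `G`. -/
def IsIndepOn {V : Type} (G : SimpleGraph V) (S : Set V) : Prop :=
  S.Pairwise fun u v => ¬ G.Adj u v

/-- The independence number of `G`. -/
noncomputable def indepNum {V : Type} (G : SimpleGraph V) : ℕ :=
  sSup {n | ∃ S : Set V, IsIndepOn G S ∧ S.ncard = n}

/-- The clique number of `G`. -/
noncomputable def cliqueNumber {V : Type} (G : SimpleGraph V) : ℕ :=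
  sSup {n | ∃ S : Set V, G.IsClique S ∧ S.ncard = n}

/-- A tree decomposition of a graph `G`. -/
structure TreeDecomp {V : Type} (G : SimpleGraph V) where
  ι : Type
  tree : SimpleGraph ι
  tree_isTree : tree.IsTree
  bag : ι → Set V
  mem_bag : ∀ v : V, ∃ t, v ∈ bag t
  edge_bag : ∀ ⦃u v : V⦄, G.Adj u v → ∃ t, u ∈ bag t ∧ v ∈ bag t
  bag_connected : ∀ v : V, (tree.induce {t | v ∈ bag t}).Connected

/-- The independence number of a family of bags: the maximum independence number
of a subgraph of `G` induced by some bag. -/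
noncomputable def bagAlpha {V : Type} (G : SimpleGraph V) {ι : Type} (bag : ι → Set V) : ℕ :=
  sSup {n | ∃ t, ∃ S : Set V, S ⊆ bag t ∧ IsIndepOn G S ∧ S.ncard = n}

/-- The independence number of a tree decomposition. -/
noncomputable def tdAlpha {V : Type} {G : SimpleGraph V} (td : TreeDecomp G) : ℕ :=
  bagAlpha G td.bag

/-- The width of a tree decomposition: maximum bag size minus one. -/
noncomputable def tdWidth {V : Type} {G : SimpleGraph V} (td : TreeDecomp G) : ℕ :=
  sSup {n | ∃ t, (td.bag t).ncard = n} - 1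

/-- The treewidth of `G`. -/
noncomputable def treewidth {V : Type} (G : SimpleGraph V) : ℕ :=
  sInf {w | ∃ td : TreeDecomp G, tdWidth td = w}

/-- The tree-independence number of `G`. -/
noncomputable def treeIndepNum {V : Type} (G : SimpleGraph V) : ℕ :=
  sInf {k | ∃ td : TreeDecomp G, tdAlpha td = k}

/-- A graph is chordal if it has no induced cycle of length at least four. -/
def Chordal {V : Type} (G : SimpleGraph V) : Prop :=
  ∀ n : ℕ, 4 ≤ n → IsEmpty (cycleGraph n ↪g G)

section TreeLemmas

variable {ι : Type} {T : SimpleGraph ι}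

attribute [local instance] Classical.decEq

/-- `C` is a "good" set: any two members are joined by a walk staying within `C`. -/
def GoodSet (T : SimpleGraph ι) (C : Set ι) : Prop :=
  ∀ p ∈ C, ∀ q ∈ C, ∃ w : T.Walk p q, ∀ x ∈ w.support, x ∈ C

/-- The canonical path between two vertices of a tree. -/
noncomputable def tp (hT : T.IsTree) (p q : ι) : T.Walk p q :=
  (hT.1.preconnected p q).some.bypass

lemma tp_isPath (hT : T.IsTree) (p q : ι) : (tp hT p q).IsPath :=
  SimpleGraph.Walk.bypass_isPath _

lemma tp_eq (hT : T.IsTree) {p q : ι} {W : T.Walk p q} (hW : W.IsPath) : W = tp hT p q := by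
  have := hT.2.path_unique ⟨W, hW⟩ ⟨tp hT p q, tp_isPath hT p q⟩
  exact congrArg Subtype.val this

lemma mem_tp_of_good (hT : T.IsTree) {C : Set ι} (hC : GoodSet T C) {p q : ι}
    (hp : p ∈ C) (hq : q ∈ C) : ∀ x ∈ (tp hT p q).support, x ∈ C := by
  obtain ⟨w, hw⟩ := hC p hp q hq
  have h1 : w.bypass = tp hT p q := tp_eq hT w.bypass_isPath
  intro x hx
  rw [← h1] at hx
  exact hw x (w.support_bypass_subset hx)

lemma good_inter (hT : T.IsTree) {C1 C2 : Set ι} (g1 : GoodSet T C1) (g2 : GoodSet T C2) :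
    GoodSet T (C1 ∩ C2) := by
  intro p hp q hq
  exact ⟨tp hT p q, fun x hx =>
    ⟨mem_tp_of_good hT g1 hp.1 hq.1 x hx, mem_tp_of_good hT g2 hp.2 hq.2 x hx⟩⟩

lemma good_of_induce_connected {C : Set ι} (h : (T.induce C).Connected) : GoodSet T C := by
  intro p hp q hq
  obtain ⟨w'⟩ := h.preconnected ⟨p, hp⟩ ⟨q, hq⟩
  let f : T.induce C →g T := ⟨Subtype.val, fun {a b} hab => hab⟩
  refine ⟨w'.map f, ?_⟩
  intro x hx
  rw [SimpleGraph.Walk.support_map] at hx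
  obtain ⟨a, _, rfl⟩ := List.mem_map.mp hx
  exact a.2

/-- Decompose a walk at its first vertex belonging to `C`. -/
lemma exists_first {C : Set ι} : ∀ {r p : ι} (R : T.Walk r p), p ∈ C →
    ∃ m, m ∈ C ∧ ∃ (R1 : T.Walk r m) (R2 : T.Walk m p), R = R1.append R2 ∧
      ∀ x ∈ R1.support, x ∈ C → x = m := by
  intro r p R
  induction R with
  | nil =>
    intro hp
    exact ⟨_, hp, SimpleGraph.Walk.nil, SimpleGraph.Walk.nil, rfl, by simp⟩
  | @cons a b c h W ih =>
    intro hp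
    by_cases ha : a ∈ C
    · refine ⟨a, ha, SimpleGraph.Walk.nil, SimpleGraph.Walk.cons h W, rfl, ?_⟩
      intro x hx _
      simpa using hx
    · obtain ⟨m, hm, R1, R2, hEq, hcond⟩ := ih hp
      refine ⟨m, hm, SimpleGraph.Walk.cons h R1, R2, by rw [SimpleGraph.Walk.cons_append, hEq], ?_⟩
      intro x hx hxC
      rw [SimpleGraph.Walk.support_cons] at hx
      rcases List.mem_cons.mp hx with rfl | hx
      · exact absurd hxC ha
      · exact hcond x hx hxC

lemma isPath_append {a b c : ι} {p : T.Walk a b} {q : T.Walk b c} (hp : p.IsPath)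
    (hq : q.IsPath) (h : ∀ x ∈ p.support, x ∈ q.support → x = b) : (p.append q).IsPath := by
  rw [SimpleGraph.Walk.isPath_def, SimpleGraph.Walk.support_append]
  have hq' : q.support.Nodup := (SimpleGraph.Walk.isPath_def _).mp hq
  have hbq : b ∉ q.support.tail := by
    have := hq'
    rw [q.support_eq_cons] at this
    exact (List.nodup_cons.mp this).1
  refine List.Nodup.append ((SimpleGraph.Walk.isPath_def _).mp hp) (hq'.sublist (List.tail_sublist _)) ?_
  intro x hx hx'
  have hxq : x ∈ q.support := by
    rw [q.support_eq_cons]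
    exact List.mem_cons_of_mem _ hx'
  exact hbq ((h x hx hxq) ▸ hx')

lemma median (hT : T.IsTree) (p q r : ι) :
    ∃ m, m ∈ (tp hT p q).support ∧ m ∈ (tp hT p r).support ∧ m ∈ (tp hT q r).support := by
  obtain ⟨m, hmP, R1, R2, hsplit, hfirst⟩ :=
    exists_first (C := {x | x ∈ (tp hT p q).support}) (tp hT r p) (tp hT p q).start_mem_support
  have hRpath : (R1.append R2).IsPath := hsplit ▸ tp_isPath hT r p
  have hR1path : R1.IsPath := hRpath.of_append_left
  have hmR : m ∈ (tp hT r p).support := by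
    rw [hsplit, SimpleGraph.Walk.mem_support_append_iff]
    exact Or.inl R1.end_mem_support
  refine ⟨m, hmP, ?_, ?_⟩
  · have h1 : (tp hT r p).reverse = tp hT p r := tp_eq hT (tp_isPath hT r p).reverse
    rw [← h1, SimpleGraph.Walk.support_reverse]
    exact List.mem_reverse.mpr hmR
  · have hQpath : ((tp hT p q).dropUntil m hmP).IsPath := (tp_isPath hT p q).dropUntil hmP
    have hW : (R1.append ((tp hT p q).dropUntil m hmP)).IsPath := by
      refine isPath_append hR1path hQpath ?_
      intro x hx1 hx2
      exact hfirst x hx1 (SimpleGraph.Walk.support_dropUntil_subset _ hmP hx2)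
    have h2 : (R1.append ((tp hT p q).dropUntil m hmP)).reverse = tp hT q r :=
      tp_eq hT hW.reverse
    rw [← h2, SimpleGraph.Walk.support_reverse]
    refine List.mem_reverse.mpr ?_
    rw [SimpleGraph.Walk.mem_support_append_iff]
    exact Or.inl R1.end_mem_support

lemma helly3 (hT : T.IsTree) {C1 C2 C3 : Set ι} (g1 : GoodSet T C1) (g2 : GoodSet T C2)
    (g3 : GoodSet T C3) (h12 : (C1 ∩ C2).Nonempty) (h13 : (C1 ∩ C3).Nonempty)
    (h23 : (C2 ∩ C3).Nonempty) : ∃ m, m ∈ C1 ∧ m ∈ C2 ∧ m ∈ C3 := by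
  obtain ⟨p, hp1, hp2⟩ := h12
  obtain ⟨q, hq1, hq3⟩ := h13
  obtain ⟨r, hr2, hr3⟩ := h23
  obtain ⟨m, h1, h2, h3⟩ := median hT p q r
  exact ⟨m, mem_tp_of_good hT g1 hp1 hq1 m h1, mem_tp_of_good hT g2 hp2 hr2 m h2,
    mem_tp_of_good hT g3 hq3 hr3 m h3⟩

lemma hellyFin (hT : T.IsTree) :
    ∀ (k : ℕ) (S : Fin (k+1) → Set ι), (∀ i, GoodSet T (S i)) →
      (∀ i j, (S i ∩ S j).Nonempty) → ∃ m, ∀ i, m ∈ S i := by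
  intro k
  induction k with
  | zero =>
    intro S g h
    obtain ⟨m, hm, _⟩ := h 0 0
    exact ⟨m, fun i => (Fin.eq_zero i) ▸ hm⟩
  | succ k ih =>
    intro S g h
    have h' : ∀ i j : Fin (k+1),
        ((S i.castSucc ∩ S (Fin.last (k+1))) ∩ (S j.castSucc ∩ S (Fin.last (k+1)))).Nonempty := by
      intro i j
      obtain ⟨m, m1, m2, m3⟩ := helly3 hT (g i.castSucc) (g j.castSucc) (g (Fin.last _))
        (h _ _) (h _ _) (h _ _)
      exact ⟨m, ⟨m1, m3⟩, ⟨m2, m3⟩⟩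
    obtain ⟨m, hm⟩ := ih (fun i => S i.castSucc ∩ S (Fin.last (k+1)))
      (fun i => good_inter hT (g _) (g _)) h'
    refine ⟨m, fun i => ?_⟩
    rcases Fin.eq_castSucc_or_eq_last i with ⟨j, rfl⟩ | rfl
    · exact (hm j).1
    · exact (hm 0).2

lemma sep_mem {x y : ι} (hb : ¬ (T.deleteEdges {s(x,y)}).Reachable x y) :
    ∀ {a b : ι} (W : T.Walk a b),
      (T.deleteEdges {s(x,y)}).Reachable x a → (T.deleteEdges {s(x,y)}).Reachable y b →
      y ∈ W.support := by
  intro a b W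
  induction W with
  | nil =>
    intro hxa hyb
    exact absurd (hxa.trans hyb.symm) hb
  | @cons a c b hac W ih =>
    intro hxa hyb
    rw [SimpleGraph.Walk.support_cons]
    by_cases hay : a = y
    · exact hay ▸ List.mem_cons_self
    · by_cases hedge : s(a, c) = s(x, y)
      · rcases Sym2.eq_iff.mp hedge with ⟨rfl, rfl⟩ | ⟨rfl, rfl⟩
        · exact List.mem_cons_of_mem _ W.start_mem_support
        · exact absurd rfl hay
      · have hadj : (T.deleteEdges {s(x,y)}).Adj a c := by
          rw [SimpleGraph.deleteEdges_adj]
          exact ⟨hac, by simpa using hedge⟩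
        exact List.mem_cons_of_mem _ (ih (hxa.trans hadj.reachable) hyb)

lemma crossing (hT : T.IsTree) {C1 C2 : Set ι} (h1 : GoodSet T C1) (h2 : GoodSet T C2)
    (hd : ∀ x, x ∈ C1 → x ∉ C2) {t1 t2 : ι} (ht1 : t1 ∈ C1) (ht2 : t2 ∈ C2) :
    ∃ y, ∀ D : Set ι, GoodSet T D → (D ∩ C1).Nonempty → (D ∩ C2).Nonempty → y ∈ D := by
  have ht2' : t2 ∈ {x | x ∉ C1} := fun h => hd t2 h ht2
  obtain ⟨y, hyC, R1, R2, hsplit, hfirst⟩ :=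
    exists_first (C := {x | x ∉ C1}) (tp hT t1 t2) ht2'
  have hPpath : (R1.append R2).IsPath := hsplit ▸ tp_isPath hT t1 t2
  have hR1path : R1.IsPath := hPpath.of_append_left
  have ht1y : t1 ≠ y := fun h => hyC (h ▸ ht1)
  have hR1nil : ¬ R1.Nil := SimpleGraph.Walk.not_nil_of_ne ht1y
  obtain ⟨c, hc, W, hR1eq⟩ := SimpleGraph.Walk.not_nil_iff.mp hR1nil
  obtain ⟨x, Q, hxy, hconcat⟩ := SimpleGraph.Walk.exists_cons_eq_concat hc W
  have hR1eq2 : R1 = Q.concat hxy := by rw [hR1eq, hconcat]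
  have hxney : x ≠ y := hxy.ne
  have hxC1 : x ∈ C1 := by
    by_contra hxc
    exact hxney (hfirst x (by
      rw [hR1eq2, SimpleGraph.Walk.support_concat]
      exact List.mem_append_left _ Q.end_mem_support) hxc)
  have hyC1 : y ∉ C1 := hyC
  -- the deleted-edge graph
  set G' := T.deleteEdges {s(x,y)} with hG'
  have hbridge : ¬ G'.Reachable x y := by
    have hbr := (isAcyclic_iff_forall_adj_isBridge.mp hT.2) hxy
    exact SimpleGraph.isBridge_iff.mp hbr
  -- reachability from x within C1
  have hreachC1 : ∀ z ∈ C1, G'.Reachable x z := by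
    intro z hz
    obtain ⟨w, hw⟩ := h1 x hxC1 z hz
    refine ⟨w.toDeleteEdges _ ?_⟩
    intro e he
    simp only [Set.mem_singleton_iff]
    intro heq
    subst heq
    exact hyC1 (hw y (w.snd_mem_support_of_mem_edges he))
  -- x is not in R2's support
  have hxR2 : x ∉ R2.support := by
    intro hmem
    have hnodup := (SimpleGraph.Walk.isPath_def _).mp hPpath
    rw [SimpleGraph.Walk.support_append] at hnodup
    have hxR1 : x ∈ R1.support := by
      rw [hR1eq2, SimpleGraph.Walk.support_concat]
      exact List.mem_append_left _ Q.end_mem_support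
    have hxtail : x ∈ R2.support.tail := by
      have hmem2 : x ∈ y :: R2.support.tail := by rw [← R2.support_eq_cons]; exact hmem
      rcases List.mem_cons.mp hmem2 with h' | h'
      · exact absurd h' hxney
      · exact h'
    exact (List.disjoint_of_nodup_append hnodup) hxR1 hxtail
  have hyt2 : G'.Reachable y t2 := by
    refine ⟨R2.toDeleteEdges _ ?_⟩
    intro e he
    simp only [Set.mem_singleton_iff]
    intro heq
    subst heq
    exact hxR2 (R2.fst_mem_support_of_mem_edges he)
  have hreachC2 : ∀ z ∈ C2, G'.Reachable y z := by
    intro z hz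
    obtain ⟨w, hw⟩ := h2 t2 ht2 z hz
    refine hyt2.trans ⟨w.toDeleteEdges _ ?_⟩
    intro e he
    simp only [Set.mem_singleton_iff]
    intro heq
    subst heq
    exact hd x hxC1 (hw x (w.fst_mem_support_of_mem_edges he))
  refine ⟨y, ?_⟩
  rintro D hD ⟨pp, hpD, hpC1⟩ ⟨qq, hqD, hqC2⟩
  obtain ⟨w, hw⟩ := hD pp hpD qq hqD
  exact hw y (sep_mem hbridge w (hreachC1 pp hpC1) (hreachC2 qq hqC2))

end TreeLemmas

section Main

/-- Independent sets in `K_{n,n}` have size at most `n`. -/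
lemma range_inl_ncard (n : ℕ) : (Set.range (Sum.inl : Fin n → Fin n ⊕ Fin n)).ncard = n := by
  rw [← Set.image_univ, Set.ncard_image_of_injective _ Sum.inl_injective, Set.ncard_univ,
    Nat.card_eq_fintype_card, Fintype.card_fin]

lemma range_inr_ncard (n : ℕ) : (Set.range (Sum.inr : Fin n → Fin n ⊕ Fin n)).ncard = n := by
  rw [← Set.image_univ, Set.ncard_image_of_injective _ Sum.inr_injective, Set.ncard_univ,
    Nat.card_eq_fintype_card, Fintype.card_fin]

lemma indep_left (n : ℕ) :
    IsIndepOn (completeBipartiteGraph (Fin n) (Fin n)) (Set.range Sum.inl) := by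
  rintro u ⟨a, rfl⟩ v ⟨b, rfl⟩ hne
  simp

lemma indep_right (n : ℕ) :
    IsIndepOn (completeBipartiteGraph (Fin n) (Fin n)) (Set.range Sum.inr) := by
  rintro u ⟨a, rfl⟩ v ⟨b, rfl⟩ hne
  simp

lemma indep_card {n : ℕ} (S : Set (Fin n ⊕ Fin n))
    (h : IsIndepOn (completeBipartiteGraph (Fin n) (Fin n)) S) : S.ncard ≤ n := by
  by_cases hl : ∃ a, Sum.inl a ∈ S
  · obtain ⟨a, ha⟩ := hl
    have hsub : S ⊆ Set.range Sum.inl := by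
      rintro (x | x) hx
      · exact ⟨x, rfl⟩
      · exact absurd (by simp : (completeBipartiteGraph (Fin n) (Fin n)).Adj (Sum.inl a)
          (Sum.inr x)) (h ha hx (by simp))
    calc S.ncard ≤ (Set.range (Sum.inl : Fin n → Fin n ⊕ Fin n)).ncard :=
          Set.ncard_le_ncard hsub (Set.finite_range _)
      _ = n := range_inl_ncard n
  · have hsub : S ⊆ Set.range Sum.inr := by
      rintro (x | x) hx
      · exact absurd ⟨x, hx⟩ hl
      · exact ⟨x, rfl⟩
    calc S.ncard ≤ (Set.range (Sum.inr : Fin n → Fin n ⊕ Fin n)).ncard :=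
          Set.ncard_le_ncard hsub (Set.finite_range _)
      _ = n := range_inr_ncard n

/-- The trivial tree decomposition with a single bag. -/
noncomputable def trivTD {V : Type} (G : SimpleGraph V) : TreeDecomp G where
  ι := Unit
  tree := ⊥
  tree_isTree := by
    constructor
    · constructor
      · intro a b
        have : a = b := Subsingleton.elim a b
        exact this ▸ SimpleGraph.Reachable.refl a
    · intro v c hc
      cases c with
      | nil => exact hc.ne_nil rfl
      | cons h p => exact h.elim
  bag := fun _ => Set.univ
  mem_bag := fun v => ⟨(), Set.mem_univ v⟩
  edge_bag := fun u v _ => ⟨(), Set.mem_univ u, Set.mem_univ v⟩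
  bag_connected := by
    intro v
    haveI : Nonempty {t : Unit // t ∈ {t | v ∈ (Set.univ : Set V)}} := ⟨⟨(), Set.mem_univ v⟩⟩
    constructor
    intro a b
    have : a = b := Subtype.ext (Subsingleton.elim a.1 b.1)
    exact this ▸ SimpleGraph.Reachable.refl a

lemma tdAlpha_trivTD (n : ℕ) :
    tdAlpha (trivTD (completeBipartiteGraph (Fin n) (Fin n))) = n := by
  have hmem : n ∈ {m | ∃ t, ∃ S : Set (Fin n ⊕ Fin n),
      S ⊆ (trivTD (completeBipartiteGraph (Fin n) (Fin n))).bag t ∧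
      IsIndepOn (completeBipartiteGraph (Fin n) (Fin n)) S ∧ S.ncard = m} :=
    ⟨(), Set.range Sum.inl, Set.subset_univ _, indep_left n, range_inl_ncard n⟩
  have hbd : ∀ m ∈ {m | ∃ t, ∃ S : Set (Fin n ⊕ Fin n),
      S ⊆ (trivTD (completeBipartiteGraph (Fin n) (Fin n))).bag t ∧
      IsIndepOn (completeBipartiteGraph (Fin n) (Fin n)) S ∧ S.ncard = m}, m ≤ n := by
    rintro m ⟨t, S, _, hi, rfl⟩
    exact indep_card S hi
  exact le_antisymm (csSup_le ⟨n, hmem⟩ hbd) (le_csSup ⟨n, hbd⟩ hmem)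

/-- In any tree decomposition of `K_{n,n}`, some bag contains a full side. -/
lemma exists_side {n : ℕ} (hn : 1 ≤ n)
    (td : TreeDecomp (completeBipartiteGraph (Fin n) (Fin n))) :
    ∃ t, (∀ i, Sum.inl i ∈ td.bag t) ∨ (∀ i, Sum.inr i ∈ td.bag t) := by
  set T := td.tree with hT_def
  have hT : T.IsTree := td.tree_isTree
  set S : (Fin n ⊕ Fin n) → Set td.ι := fun v => {t | v ∈ td.bag t} with hS_def
  have good : ∀ v, GoodSet T (S v) := fun v => good_of_induce_connected (td.bag_connected v)
  have hne : ∀ v, (S v).Nonempty := fun v => td.mem_bag v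
  have cross : ∀ i j : Fin n, (S (Sum.inl i) ∩ S (Sum.inr j)).Nonempty := by
    intro i j
    obtain ⟨t, h1, h2⟩ := td.edge_bag (show (completeBipartiteGraph (Fin n) (Fin n)).Adj
      (Sum.inl i) (Sum.inr j) by simp)
    exact ⟨t, h1, h2⟩
  by_cases hA : ∀ i j : Fin n, (S (Sum.inl i) ∩ S (Sum.inl j)).Nonempty
  · obtain ⟨k, rfl⟩ : ∃ k, n = k + 1 := ⟨n - 1, (Nat.succ_pred_eq_of_pos hn).symm⟩
    obtain ⟨m, hm⟩ := hellyFin hT k (fun i => S (Sum.inl i)) (fun i => good _) (fun i j => hA i j)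
    exact ⟨m, Or.inl fun i => hm i⟩
  · push_neg at hA
    obtain ⟨i, j, hij⟩ := hA
    have hd : ∀ x, x ∈ S (Sum.inl i) → x ∉ S (Sum.inl j) :=
      fun x h1 h2 => Set.eq_empty_iff_forall_notMem.mp hij x ⟨h1, h2⟩
    obtain ⟨t1, ht1⟩ := hne (Sum.inl i)
    obtain ⟨t2, ht2⟩ := hne (Sum.inl j)
    obtain ⟨y, hy⟩ := crossing hT (good (Sum.inl i)) (good (Sum.inl j)) hd ht1 ht2
    refine ⟨y, Or.inr fun b => ?_⟩
    have h1 : (S (Sum.inr b) ∩ S (Sum.inl i)).Nonempty := by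
      obtain ⟨t, u1, u2⟩ := cross i b; exact ⟨t, u2, u1⟩
    have h2 : (S (Sum.inr b) ∩ S (Sum.inl j)).Nonempty := by
      obtain ⟨t, u1, u2⟩ := cross j b; exact ⟨t, u2, u1⟩
    exact hy (S (Sum.inr b)) (good _) h1 h2

lemma n_le_tdAlpha {n : ℕ} (hn : 1 ≤ n)
    (td : TreeDecomp (completeBipartiteGraph (Fin n) (Fin n))) : n ≤ tdAlpha td := by
  obtain ⟨t, ht⟩ := exists_side hn td
  have hbd : BddAbove {m | ∃ t, ∃ S : Set (Fin n ⊕ Fin n),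
      S ⊆ td.bag t ∧ IsIndepOn (completeBipartiteGraph (Fin n) (Fin n)) S ∧ S.ncard = m} := by
    refine ⟨n, ?_⟩
    rintro m ⟨t', S', _, hi, rfl⟩
    exact indep_card S' hi
  rcases ht with h | h
  · exact le_csSup hbd ⟨t, Set.range Sum.inl, by rintro x ⟨a, rfl⟩; exact h a,
      indep_left n, range_inl_ncard n⟩
  · exact le_csSup hbd ⟨t, Set.range Sum.inr, by rintro x ⟨a, rfl⟩; exact h a,
      indep_right n, range_inr_ncard n⟩

end Main

theorem stmt5 (n : ℕ) (hn : 1 ≤ n) :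
    treeIndepNum (completeBipartiteGraph (Fin n) (Fin n)) = n := by
  apply le_antisymm
  · exact Nat.sInf_le ⟨trivTD _, tdAlpha_trivTD n⟩
  · refine le_csInf ⟨n, trivTD _, tdAlpha_trivTD n⟩ ?_
    rintro k ⟨td, rfl⟩
    exact n_le_tdAlpha hn td
end

section
/- Let C be a clique cutset in a graph G with cut-partition (A, B, C), and let G_A = G[A ∪ C] and G_B = G[B ∪ C]. Then the tree-independence number of G equals max{tree-α(G_A), tree-α(G_B)}. -/
open SimpleGraph

section Aux

variable {V : Type}

lemma bagAlpha_bddAbove [Finite V] (G : SimpleGraph V) {ι : Type} (bag : ι → Set V) :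
    BddAbove {n | ∃ t, ∃ S : Set V, S ⊆ bag t ∧ IsIndepOn G S ∧ S.ncard = n} := by
  refine ⟨Nat.card V, ?_⟩
  rintro n ⟨t, S, -, -, rfl⟩
  rw [← Set.ncard_univ]
  exact Set.ncard_le_ncard (Set.subset_univ S) Set.finite_univ

/-- The trivial tree decomposition with a single bag. -/
noncomputable def trivialTD (G : SimpleGraph V) : TreeDecomp G where
  ι := Unit
  tree := ⊥
  tree_isTree := ⟨(connected_iff _).mpr ⟨fun x y => Subsingleton.elim x y ▸ Reachable.refl x, ⟨()⟩⟩,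
    isAcyclic_bot⟩
  bag _ := Set.univ
  mem_bag v := ⟨(), Set.mem_univ v⟩
  edge_bag u v _ := ⟨(), Set.mem_univ u, Set.mem_univ v⟩
  bag_connected v :=
    (connected_iff _).mpr ⟨fun x y => Subsingleton.elim x y ▸ Reachable.refl x, ⟨⟨(), Set.mem_univ v⟩⟩⟩

lemma exists_opt_td (G : SimpleGraph V) :
    ∃ td : TreeDecomp G, tdAlpha td = treeIndepNum G :=
 by
  have h : ({k | ∃ td : TreeDecomp G, tdAlpha td = k}).Nonempty := ⟨_, trivialTD G, rfl⟩
  exact Nat.sInf_mem h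

/-- Restrict a tree decomposition to an induced subgraph. -/
def TreeDecomp.restrict {G : SimpleGraph V} (td : TreeDecomp G) (X : Set V) :
    TreeDecomp (G.induce X) where
  ι := td.ι
  tree := td.tree
  tree_isTree := td.tree_isTree
  bag t := Subtype.val ⁻¹' td.bag t
  mem_bag v := td.mem_bag v.val
  edge_bag u v h := td.edge_bag h
  bag_connected v := td.bag_connected v.val

lemma tdAlpha_restrict_le [Finite V] {G : SimpleGraph V} (td : TreeDecomp G) (X : Set V) :
    tdAlpha (td.restrict X) ≤ tdAlpha td := by
  apply csSup_le'
  rintro n ⟨t, S, hsub, hind, rfl⟩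
  apply le_csSup (bagAlpha_bddAbove G td.bag)
  refine ⟨t, Subtype.val '' S, ?_, ?_, Set.ncard_image_of_injective S Subtype.val_injective⟩
  · rintro _ ⟨x, hx, rfl⟩; exact hsub hx
  · rintro _ ⟨x, hx, rfl⟩ _ ⟨y, hy, rfl⟩ hne hadj
    exact hind hx hy (fun h => hne (by rw [h])) hadj

lemma treeIndepNum_induce_le [Finite V] (G : SimpleGraph V) (X : Set V) :
    treeIndepNum (G.induce X) ≤ treeIndepNum G := by
  obtain ⟨td, htd⟩ := exists_opt_td G
  calc treeIndepNum (G.induce X) ≤ tdAlpha (td.restrict X) := Nat.sInf_le ⟨_, rfl⟩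
    _ ≤ tdAlpha td := tdAlpha_restrict_le td X
    _ = _ := htd

end Aux


section Helly

variable {V : Type}
open SimpleGraph Walk

lemma exists_walk_in {ι : Type} {T : SimpleGraph ι} {S : Set ι} (h : (T.induce S).Connected)
    {a b : ι} (ha : a ∈ S) (hb : b ∈ S) :
    ∃ p : T.Walk a b, ∀ x ∈ p.support, x ∈ S := by
  obtain ⟨w⟩ := h.preconnected ⟨a, ha⟩ ⟨b, hb⟩
  refine ⟨w.map (SimpleGraph.Embedding.induce S).toHom, ?_⟩
  intro x hx
  replace hx := (congrArg (x ∈ ·) (Walk.support_map (SimpleGraph.Embedding.induce S).toHom w)).mp hx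
  obtain ⟨y, -, rfl⟩ := List.mem_map.mp hx
  exact y.2

lemma helly_step {G : SimpleGraph V} (td : TreeDecomp G) {v : V} {K : Set V}
    (hadj : ∀ u ∈ K, u ≠ v → G.Adj u v) :
    ∀ {t r : td.ι} (p : td.tree.Walk t r), p.IsPath → K ⊆ td.bag t → v ∈ td.bag r →
      ∃ t', insert v K ⊆ td.bag t' := by
  intro t r p
  induction p with
  | nil => exact fun _ hK hv => ⟨_, Set.insert_subset hv hK⟩
  | @cons t t₁ r hadj₁ p₁ ih =>
    intro hp hK hv
    by_cases hvt : v ∈ td.bag t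
    · exact ⟨t, Set.insert_subset hvt hK⟩
    refine ih (Walk.IsPath.of_cons hp) ?_ hv
    intro u hu
    have hune : u ≠ v := fun h => hvt (h ▸ hK hu)
    obtain ⟨s, hus, hvs⟩ := td.edge_bag (hadj u hu hune)
    have hbr : td.tree.IsBridge s(t, t₁) :=
      (isAcyclic_iff_forall_adj_isBridge.mp td.tree_isTree.IsAcyclic) hadj₁
    obtain ⟨wu, hwu⟩ := exists_walk_in (td.bag_connected u) (hK hu) hus
    by_contra hut₁
    have ht₁ : t₁ ∉ wu.support := fun h => hut₁ (hwu _ h)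
    have hew : s(t, t₁) ∉ wu.edges := fun h => ht₁ (wu.snd_mem_support_of_mem_edges h)
    obtain ⟨wv, hwv⟩ := exists_walk_in (td.bag_connected v) hvs hv
    have htv : t ∉ wv.support := fun h => hvt (hwv _ h)
    have hev : s(t, t₁) ∉ wv.edges := fun h => htv (wv.fst_mem_support_of_mem_edges h)
    have hep : s(t, t₁) ∉ p₁.edges := fun h =>
      ((Walk.cons_isPath_iff _ _).mp hp).2 (p₁.fst_mem_support_of_mem_edges h)
    have h1 : (td.tree.deleteEdges {s(t, t₁)}).Reachable t s :=
      ⟨wu.toDeleteEdges _ (fun e he hh => hew (Set.mem_singleton_iff.mp hh ▸ he))⟩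
    have h2 : (td.tree.deleteEdges {s(t, t₁)}).Reachable s r :=
      ⟨wv.toDeleteEdges _ (fun e he hh => hev (Set.mem_singleton_iff.mp hh ▸ he))⟩
    have h3 : (td.tree.deleteEdges {s(t, t₁)}).Reachable t₁ r :=
      ⟨p₁.toDeleteEdges _ (fun e he hh => hep (Set.mem_singleton_iff.mp hh ▸ he))⟩
    have hreach : (td.tree.deleteEdges {s(t, t₁)}).Reachable t t₁ :=
      (h1.trans h2).trans h3.symm
    rw [SimpleGraph.deleteEdges] at hreach
    exact (isBridge_iff.mp hbr) hreach

lemma clique_in_bag {G : SimpleGraph V} (td : TreeDecomp G) (hι : Nonempty td.ι)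
    {K : Set V} (hfin : K.Finite) (hK : G.IsClique K) : ∃ t, K ⊆ td.bag t := by
  classical
  revert hK
  refine Set.Finite.induction_on _ hfin (fun _ => ⟨hι.some, by simp⟩) ?_
  intro v K hvK hKfin ih hK
  obtain ⟨t, ht⟩ := ih (hK.subset (Set.subset_insert _ _))
  obtain ⟨r, hr⟩ := td.mem_bag v
  obtain ⟨p0⟩ := td.tree_isTree.isConnected t r
  refine helly_step td ?_ p0.toPath.1 p0.toPath.2 ht hr
  intro u hu hne
  exact hK (Set.mem_insert_of_mem _ hu) (Set.mem_insert v K) hne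

end Helly

section Glue

open Sum SimpleGraph Walk

variable {α β : Type}

/-- Disjoint union of two graphs with one extra edge between `a0` and `b0`. -/
def glueG (TA : SimpleGraph α) (TB : SimpleGraph β) (a0 : α) (b0 : β) :
    SimpleGraph (α ⊕ β) where
  Adj x y := (∃ a a', x = inl a ∧ y = inl a' ∧ TA.Adj a a') ∨
             (∃ b b', x = inr b ∧ y = inr b' ∧ TB.Adj b b') ∨
             (x = inl a0 ∧ y = inr b0) ∨ (x = inr b0 ∧ y = inl a0)
  symm := by
    constructor
    rintro x y (⟨a, a', rfl, rfl, h⟩ | ⟨b, b', rfl, rfl, h⟩ | ⟨rfl, rfl⟩ | ⟨rfl, rfl⟩)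
    · exact Or.inl ⟨a', a, rfl, rfl, h.symm⟩
    · exact Or.inr (Or.inl ⟨b', b, rfl, rfl, h.symm⟩)
    · exact Or.inr (Or.inr (Or.inr ⟨rfl, rfl⟩))
    · exact Or.inr (Or.inr (Or.inl ⟨rfl, rfl⟩))
  loopless := by
    constructor
    rintro x (⟨a, a', rfl, h, hadj⟩ | ⟨b, b', rfl, h, hadj⟩ | ⟨rfl, h⟩ | ⟨rfl, h⟩)
    · cases h; exact TA.loopless.irrefl _ hadj
    · cases h; exact TB.loopless.irrefl _ hadj
    · exact nomatch h
    · exact nomatch h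

variable {TA : SimpleGraph α} {TB : SimpleGraph β} {a0 : α} {b0 : β}

lemma glueG_inl_inl {a a' : α} : (glueG TA TB a0 b0).Adj (inl a) (inl a') ↔ TA.Adj a a' := by
  constructor
  · rintro (⟨x, y, hx, hy, h⟩ | ⟨x, y, hx, hy, h⟩ | ⟨hx, hy⟩ | ⟨hx, hy⟩)
    · cases hx; cases hy; exact h
    · exact nomatch hx
    · exact nomatch hy
    · exact nomatch hx
  · intro h; exact Or.inl ⟨a, a', rfl, rfl, h⟩

lemma glueG_inr_inr {b b' : β} : (glueG TA TB a0 b0).Adj (inr b) (inr b') ↔ TB.Adj b b' := by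
  constructor
  · rintro (⟨x, y, hx, hy, h⟩ | ⟨x, y, hx, hy, h⟩ | ⟨hx, hy⟩ | ⟨hx, hy⟩)
    · exact nomatch hx
    · cases hx; cases hy; exact h
    · exact nomatch hx
    · exact nomatch hy
  · intro h; exact Or.inr (Or.inl ⟨b, b', rfl, rfl, h⟩)

lemma glueG_inl_inr {a : α} {b : β} :
    (glueG TA TB a0 b0).Adj (inl a) (inr b) ↔ a = a0 ∧ b = b0 := by
  constructor
  · rintro (⟨x, y, hx, hy, h⟩ | ⟨x, y, hx, hy, h⟩ | ⟨hx, hy⟩ | ⟨hx, hy⟩)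
    · exact nomatch hy
    · exact nomatch hx
    · exact ⟨Sum.inl.inj hx, Sum.inr.inj hy⟩
    · exact nomatch hx
  · rintro ⟨rfl, rfl⟩; exact Or.inr (Or.inr (Or.inl ⟨rfl, rfl⟩))

lemma glueG_inr_inl {a : α} {b : β} :
    (glueG TA TB a0 b0).Adj (inr b) (inl a) ↔ a = a0 ∧ b = b0 := by
  rw [SimpleGraph.adj_comm]; exact glueG_inl_inr

/-- In a graph on a sum type with no cross edges, walks starting on the left stay left. -/
lemma walk_isLeft {H : SimpleGraph (α ⊕ β)}
    (hcross : ∀ a b, ¬ H.Adj (inl a) (inr b)) :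
    ∀ {x y : α ⊕ β} (w : H.Walk x y), x.isLeft → ∀ z ∈ w.support, z.isLeft := by
  intro x y w
  induction w with
  | nil =>
    intro hx z hz
    rw [Walk.support_nil, List.mem_singleton] at hz
    exact hz ▸ hx
  | @cons x m y h p ih =>
    intro hx z hz
    rw [Walk.support_cons, List.mem_cons] at hz
    rcases hz with rfl | hz
    · exact hx
    · obtain ⟨a, rfl⟩ := Sum.isLeft_iff.mp hx
      cases m with
      | inl a' => exact ih rfl z hz
      | inr b' => exact absurd h (hcross a b')

lemma walk_isRight {H : SimpleGraph (α ⊕ β)}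
    (hcross : ∀ a b, ¬ H.Adj (inl a) (inr b)) :
    ∀ {x y : α ⊕ β} (w : H.Walk x y), x.isRight → ∀ z ∈ w.support, z.isRight := by
  intro x y w
  induction w with
  | nil =>
    intro hx z hz
    rw [Walk.support_nil, List.mem_singleton] at hz
    exact hz ▸ hx
  | @cons x m y h p ih =>
    intro hx z hz
    rw [Walk.support_cons, List.mem_cons] at hz
    rcases hz with rfl | hz
    · exact hx
    · obtain ⟨b, rfl⟩ := Sum.isRight_iff.mp hx
      cases m with
      | inl a' => exact absurd h.symm (hcross a' b)
      | inr b' => exact ih rfl z hz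

lemma lift_left {H : SimpleGraph (α ⊕ β)} {TA : SimpleGraph α}
    (hAdj : ∀ a a', H.Adj (inl a) (inl a') → TA.Adj a a') :
    ∀ {x y : α ⊕ β} (w : H.Walk x y), (∀ z ∈ w.support, z.isLeft) →
    ∃ (a a' : α) (_ : x = inl a) (_ : y = inl a') (w' : TA.Walk a a'),
      w'.support.map inl = w.support ∧ w'.edges.map (Sym2.map inl) = w.edges := by
  intro x y w
  induction w with
  | nil =>
    intro hs
    obtain ⟨a, rfl⟩ := Sum.isLeft_iff.mp (hs _ (Walk.start_mem_support _))
    exact ⟨a, a, rfl, rfl, .nil, rfl, rfl⟩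
  | @cons x m y h p ih =>
    intro hs
    obtain ⟨a, a', hm, hy, w', hsup, hedg⟩ := ih (fun z hz =>
      hs z (by rw [Walk.support_cons]; exact List.mem_cons_of_mem _ hz))
    obtain ⟨a₀, rfl⟩ := Sum.isLeft_iff.mp (hs _ (Walk.start_mem_support _))
    subst hm
    refine ⟨a₀, a', rfl, hy, .cons (hAdj _ _ h) w', ?_, ?_⟩
    · rw [Walk.support_cons, Walk.support_cons, List.map_cons, hsup]
    · rw [Walk.edges_cons, Walk.edges_cons, List.map_cons, hedg, Sym2.map_pair_eq]

lemma lift_right {H : SimpleGraph (α ⊕ β)} {TB : SimpleGraph β}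
    (hAdj : ∀ b b', H.Adj (inr b) (inr b') → TB.Adj b b') :
    ∀ {x y : α ⊕ β} (w : H.Walk x y), (∀ z ∈ w.support, z.isRight) →
    ∃ (b b' : β) (_ : x = inr b) (_ : y = inr b') (w' : TB.Walk b b'),
      w'.support.map inr = w.support ∧ w'.edges.map (Sym2.map inr) = w.edges := by
  intro x y w
  induction w with
  | nil =>
    intro hs
    obtain ⟨b, rfl⟩ := Sum.isRight_iff.mp (hs _ (Walk.start_mem_support _))
    exact ⟨b, b, rfl, rfl, .nil, rfl, rfl⟩
  | @cons x m y h p ih =>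
    intro hs
    obtain ⟨b, b', hm, hy, w', hsup, hedg⟩ := ih (fun z hz =>
      hs z (by rw [Walk.support_cons]; exact List.mem_cons_of_mem _ hz))
    obtain ⟨b₀, rfl⟩ := Sum.isRight_iff.mp (hs _ (Walk.start_mem_support _))
    subst hm
    refine ⟨b₀, b', rfl, hy, .cons (hAdj _ _ h) w', ?_, ?_⟩
    · rw [Walk.support_cons, Walk.support_cons, List.map_cons, hsup]
    · rw [Walk.edges_cons, Walk.edges_cons, List.map_cons, hedg, Sym2.map_pair_eq]

/-- Recover a cycle downstairs from a lifted walk description. -/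
lemma cycle_of_lift {γ : Type} {T : SimpleGraph γ} {H : SimpleGraph (α ⊕ β)}
    {f : γ → α ⊕ β} (hf : Function.Injective f) {z : α ⊕ β} {c : H.Walk z z} (hc : c.IsCycle)
    {a a' : γ} (w' : T.Walk a a')
    (hsup : w'.support.map f = c.support) (hedg : w'.edges.map (Sym2.map f) = c.edges)
    (ha : f a = z) (ha' : f a' = z) : ∃ (g : γ) (w : T.Walk g g), w.IsCycle := by
  obtain rfl : a' = a := hf (ha'.trans ha.symm)
  refine ⟨_, w', ?_⟩
  rw [Walk.isCycle_def]
  refine ⟨?_, ?_, ?_⟩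
  · rw [Walk.isTrail_def]
    exact List.Nodup.of_map _ (hedg.symm ▸ hc.isTrail.edges_nodup)
  · intro hnil
    have h3 := hc.three_le_length
    have : c.edges.length = 0 := by
      rw [← hedg, hnil]; rfl
    rw [Walk.length_edges] at this
    omega
  · have : (w'.support.tail.map f).Nodup := by
      rw [List.map_tail, hsup]
      exact hc.2
    exact List.Nodup.of_map _ this

lemma glueG_isTree (hA : TA.IsTree) (hB : TB.IsTree) :
    (glueG TA TB a0 b0).IsTree := by
  let homA : SimpleGraph.Hom TA (glueG TA TB a0 b0) := ⟨inl, fun h => glueG_inl_inl.mpr h⟩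
  let homB : SimpleGraph.Hom TB (glueG TA TB a0 b0) := ⟨inr, fun h => glueG_inr_inr.mpr h⟩
  have hreach : ∀ z : α ⊕ β, (glueG TA TB a0 b0).Reachable z (inl a0) := by
    intro z
    cases z with
    | inl a => exact (hA.isConnected.preconnected a a0).map homA
    | inr b =>
      have h1 : (glueG TA TB a0 b0).Reachable (inr b) (inr b0) := by
        exact (hB.isConnected.preconnected b b0).map homB
      exact h1.trans (SimpleGraph.Adj.reachable (glueG_inr_inl.mpr ⟨rfl, rfl⟩))
  constructor
  · exact (connected_iff _).mpr ⟨fun x y => (hreach x).trans (hreach y).symm, ⟨inl a0⟩⟩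
  · -- acyclic
    have hbridge : (glueG TA TB a0 b0).IsBridge s(inl a0, inr b0) := by
      rw [isBridge_iff]
      rintro ⟨w⟩
      have hcross : ∀ a b, ¬ (glueG TA TB a0 b0 \ fromEdgeSet {s(inl a0, inr b0)}).Adj (inl a) (inr b) := by
        intro a b hadj
        rw [sdiff_adj] at hadj
        obtain ⟨h1, h2⟩ := hadj
        obtain ⟨rfl, rfl⟩ := glueG_inl_inr.mp h1
        exact h2 ((fromEdgeSet_adj _).mpr ⟨rfl, by simp⟩)
      have := walk_isLeft hcross w rfl _ (Walk.end_mem_support w)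
      simp at this
    intro z c hc
    have he0 : s(inl a0, inr b0) ∉ c.edges :=
      ((isBridge_iff_adj_and_forall_cycle_notMem (G := glueG TA TB a0 b0) (glueG_inl_inr.mpr ⟨rfl, rfl⟩)).mp hbridge) c hc
    have hcnd : ∀ e ∈ c.edges, e ∉ ({s(inl a0, inr b0)} : Set (Sym2 (α ⊕ β))) :=
      fun e he hh => he0 (Set.mem_singleton_iff.mp hh ▸ he)
    have hcross : ∀ a b, ¬ ((glueG TA TB a0 b0).deleteEdges {s(inl a0, inr b0)}).Adj (inl a) (inr b) := by
      intro a b hadj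
      rw [deleteEdges_adj] at hadj
      obtain ⟨h1, h2⟩ := hadj
      obtain ⟨rfl, rfl⟩ := glueG_inl_inr.mp h1
      exact h2 rfl
    let c' : ((glueG TA TB a0 b0).deleteEdges {s(inl a0, inr b0)}).Walk z z := c.toDeleteEdges _ hcnd
    have hc' : c'.IsCycle := hc.transfer _
    cases z with
    | inl a =>
      have hsL : ∀ x ∈ c'.support, x.isLeft := walk_isLeft hcross c' rfl
      have hAdj : ∀ a a', ((glueG TA TB a0 b0).deleteEdges {s(inl a0, inr b0)}).Adj (inl a) (inl a') → TA.Adj a a' := by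
        intro a a' h
        rw [deleteEdges_adj] at h
        exact glueG_inl_inl.mp h.1
      obtain ⟨a1, a2, h1, h2, w', hsup, hedg⟩ := lift_left hAdj c' hsL
      obtain ⟨g, w, hw⟩ := cycle_of_lift inl_injective hc' w' hsup hedg h1.symm h2.symm
      exact hA.IsAcyclic w hw
    | inr b =>
      have hsR : ∀ x ∈ c'.support, x.isRight := walk_isRight hcross c' rfl
      have hAdj : ∀ b b', ((glueG TA TB a0 b0).deleteEdges {s(inl a0, inr b0)}).Adj (inr b) (inr b') → TB.Adj b b' := by
        intro b b' h
        rw [deleteEdges_adj] at h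
        exact glueG_inr_inr.mp h.1
      obtain ⟨b1, b2, h1, h2, w', hsup, hedg⟩ := lift_right hAdj c' hsR
      obtain ⟨g, w, hw⟩ := cycle_of_lift inr_injective hc' w' hsup hedg h1.symm h2.symm
      exact hB.IsAcyclic w hw

end Glue

section GlueTD

open Sum SimpleGraph Walk

variable {V : Type}

/-- Glue two tree decompositions along a clique cutset. -/
noncomputable def glueTD (G : SimpleGraph V) (A B C : Set V)
    (hcover : A ∪ B ∪ C = Set.univ)
    (hAB : Disjoint A B)
    (hnoedge : ∀ a ∈ A, ∀ b ∈ B, ¬ G.Adj a b)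
    (tdA : TreeDecomp (G.induce (A ∪ C))) (tdB : TreeDecomp (G.induce (B ∪ C)))
    (tA0 : tdA.ι) (tB0 : tdB.ι)
    (hCA : ∀ x : ↥(A ∪ C), ↑x ∈ C → x ∈ tdA.bag tA0)
    (hCB : ∀ x : ↥(B ∪ C), ↑x ∈ C → x ∈ tdB.bag tB0) :
    TreeDecomp G where
  ι := tdA.ι ⊕ tdB.ι
  tree := glueG tdA.tree tdB.tree tA0 tB0
  tree_isTree := glueG_isTree tdA.tree_isTree tdB.tree_isTree
  bag := Sum.elim (fun t => Subtype.val '' tdA.bag t) (fun t => Subtype.val '' tdB.bag t)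
  mem_bag := by
    intro v
    have hv : v ∈ A ∪ B ∪ C := hcover ▸ Set.mem_univ v
    by_cases hvB : v ∈ B
    · obtain ⟨t, ht⟩ := tdB.mem_bag ⟨v, Or.inl hvB⟩
      exact ⟨Sum.inr t, ⟨_, ht, rfl⟩⟩
    · have hv' : v ∈ A ∪ C := by
        rcases hv with (h | h) | h
        · exact Or.inl h
        · exact absurd h hvB
        · exact Or.inr h
      obtain ⟨t, ht⟩ := tdA.mem_bag ⟨v, hv'⟩
      exact ⟨Sum.inl t, ⟨_, ht, rfl⟩⟩
  edge_bag := by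
    intro u v h
    have hu : u ∈ A ∪ B ∪ C := hcover ▸ Set.mem_univ u
    have hv : v ∈ A ∪ B ∪ C := hcover ▸ Set.mem_univ v
    have key : (u ∈ A ∪ C ∧ v ∈ A ∪ C) ∨ (u ∈ B ∪ C ∧ v ∈ B ∪ C) := by
      rcases hu with (huA | huB) | huC
      · rcases hv with (hvA | hvB) | hvC
        · exact Or.inl ⟨Or.inl huA, Or.inl hvA⟩
        · exact absurd h (hnoedge u huA v hvB)
        · exact Or.inl ⟨Or.inl huA, Or.inr hvC⟩
      · rcases hv with (hvA | hvB) | hvC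
        · exact absurd h.symm (hnoedge v hvA u huB)
        · exact Or.inr ⟨Or.inl huB, Or.inl hvB⟩
        · exact Or.inr ⟨Or.inl huB, Or.inr hvC⟩
      · rcases hv with (hvA | hvB) | hvC
        · exact Or.inl ⟨Or.inr huC, Or.inl hvA⟩
        · exact Or.inr ⟨Or.inr huC, Or.inl hvB⟩
        · exact Or.inl ⟨Or.inr huC, Or.inr hvC⟩
    rcases key with ⟨hu', hv'⟩ | ⟨hu', hv'⟩
    · obtain ⟨t, h1, h2⟩ := tdA.edge_bag (u := ⟨u, hu'⟩) (v := ⟨v, hv'⟩) h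
      exact ⟨Sum.inl t, ⟨_, h1, rfl⟩, ⟨_, h2, rfl⟩⟩
    · obtain ⟨t, h1, h2⟩ := tdB.edge_bag (u := ⟨u, hu'⟩) (v := ⟨v, hv'⟩) h
      exact ⟨Sum.inr t, ⟨_, h1, rfl⟩, ⟨_, h2, rfl⟩⟩
  bag_connected := by
    intro v
    have hv : v ∈ A ∪ B ∪ C := hcover ▸ Set.mem_univ v
    by_cases hvC : v ∈ C
    · -- v is in the cutset: both sides occur, joined through the bridge
      let vA : ↥(A ∪ C) := ⟨v, Or.inr hvC⟩
      let vB : ↥(B ∪ C) := ⟨v, Or.inr hvC⟩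
      let Sv : Set (tdA.ι ⊕ tdB.ι) :=
        {s | v ∈ Sum.elim (fun t => Subtype.val '' tdA.bag t)
              (fun t => Subtype.val '' tdB.bag t) s}
      let fL : SimpleGraph.Hom (tdA.tree.induce {t | vA ∈ tdA.bag t})
          ((glueG tdA.tree tdB.tree tA0 tB0).induce Sv) :=
        ⟨fun x => ⟨Sum.inl x.1, ⟨vA, x.2, rfl⟩⟩, fun h => glueG_inl_inl.mpr h⟩
      let fR : SimpleGraph.Hom (tdB.tree.induce {t | vB ∈ tdB.bag t})
          ((glueG tdA.tree tdB.tree tA0 tB0).induce Sv) :=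
        ⟨fun x => ⟨Sum.inr x.1, ⟨vB, x.2, rfl⟩⟩, fun h => glueG_inr_inr.mpr h⟩
      let x0 : ↥Sv := ⟨Sum.inl tA0, ⟨vA, hCA vA hvC, rfl⟩⟩
      have key : ∀ x : ↥Sv,
          ((glueG tdA.tree tdB.tree tA0 tB0).induce Sv).Reachable x x0 := by
        rintro ⟨z, hz⟩
        cases z with
        | inl t =>
          obtain ⟨w, hw, hwv⟩ := hz
          obtain rfl : w = vA := Subtype.ext hwv
          have h1 := ((tdA.bag_connected vA).preconnected ⟨t, hw⟩ ⟨tA0, hCA vA hvC⟩).map fL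
          exact h1
        | inr t =>
          obtain ⟨w, hw, hwv⟩ := hz
          obtain rfl : w = vB := Subtype.ext hwv
          have h1 := ((tdB.bag_connected vB).preconnected ⟨t, hw⟩ ⟨tB0, hCB vB hvC⟩).map fR
          refine h1.trans (SimpleGraph.Adj.reachable ?_)
          exact glueG_inr_inl.mpr ⟨rfl, rfl⟩
      exact (connected_iff _).mpr ⟨fun x y => (key x).trans (key y).symm, ⟨x0⟩⟩
    · rcases (show v ∈ A ∨ v ∈ B by
        rcases hv with (h | h) | h
        exacts [Or.inl h, Or.inr h, absurd h hvC]) with hvA | hvB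
      · -- only the left side occurs
        let vA : ↥(A ∪ C) := ⟨v, Or.inl hvA⟩
        let Sv : Set (tdA.ι ⊕ tdB.ι) :=
          {s | v ∈ Sum.elim (fun t => Subtype.val '' tdA.bag t)
                (fun t => Subtype.val '' tdB.bag t) s}
        let fL : SimpleGraph.Hom (tdA.tree.induce {t | vA ∈ tdA.bag t})
            ((glueG tdA.tree tdB.tree tA0 tB0).induce Sv) :=
          ⟨fun x => ⟨Sum.inl x.1, ⟨vA, x.2, rfl⟩⟩, fun h => glueG_inl_inl.mpr h⟩
        refine Connected.map fL ?_ (tdA.bag_connected vA)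
        rintro ⟨z, hz⟩
        cases z with
        | inl t =>
          obtain ⟨w, hw, hwv⟩ := hz
          obtain rfl : w = vA := Subtype.ext hwv
          exact ⟨⟨t, hw⟩, rfl⟩
        | inr t =>
          obtain ⟨w, hw, hwv⟩ := hz
          rcases w.2 with hwB | hwC
          · exact absurd hvA (Set.disjoint_right.mp hAB (hwv ▸ hwB))
          · exact absurd (hwv ▸ hwC) hvC
      · -- only the right side occurs
        let vB : ↥(B ∪ C) := ⟨v, Or.inl hvB⟩
        let Sv : Set (tdA.ι ⊕ tdB.ι) :=
          {s | v ∈ Sum.elim (fun t => Subtype.val '' tdA.bag t)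
                (fun t => Subtype.val '' tdB.bag t) s}
        let fR : SimpleGraph.Hom (tdB.tree.induce {t | vB ∈ tdB.bag t})
            ((glueG tdA.tree tdB.tree tA0 tB0).induce Sv) :=
          ⟨fun x => ⟨Sum.inr x.1, ⟨vB, x.2, rfl⟩⟩, fun h => glueG_inr_inr.mpr h⟩
        refine Connected.map fR ?_ (tdB.bag_connected vB)
        rintro ⟨z, hz⟩
        cases z with
        | inl t =>
          obtain ⟨w, hw, hwv⟩ := hz
          rcases w.2 with hwA | hwC
          · exact absurd hvB (Set.disjoint_left.mp hAB (hwv ▸ hwA))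
          · exact absurd (hwv ▸ hwC) hvC
        | inr t =>
          obtain ⟨w, hw, hwv⟩ := hz
          obtain rfl : w = vB := Subtype.ext hwv
          exact ⟨⟨t, hw⟩, rfl⟩

end GlueTD

section Main

open Sum SimpleGraph

variable {V : Type}

lemma tdAlpha_glueTD_le [Finite V] (G : SimpleGraph V) (A B C : Set V)
    (hcover : A ∪ B ∪ C = Set.univ)
    (hAB : Disjoint A B)
    (hnoedge : ∀ a ∈ A, ∀ b ∈ B, ¬ G.Adj a b)
    (tdA : TreeDecomp (G.induce (A ∪ C))) (tdB : TreeDecomp (G.induce (B ∪ C)))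
    (tA0 : tdA.ι) (tB0 : tdB.ι)
    (hCA : ∀ x : ↥(A ∪ C), ↑x ∈ C → x ∈ tdA.bag tA0)
    (hCB : ∀ x : ↥(B ∪ C), ↑x ∈ C → x ∈ tdB.bag tB0) :
    tdAlpha (glueTD G A B C hcover hAB hnoedge tdA tdB tA0 tB0 hCA hCB) ≤
      max (tdAlpha tdA) (tdAlpha tdB) := by
  apply csSup_le'
  rintro n ⟨s, S, hsub, hind, rfl⟩
  cases s with
  | inl t =>
    refine le_trans ?_ (le_max_left _ _)
    apply le_csSup (bagAlpha_bddAbove _ _)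
    have himg : Subtype.val '' {x : ↥(A ∪ C) | ↑x ∈ S} = S := by
      apply Set.Subset.antisymm
      · rintro _ ⟨x, hx, rfl⟩; exact hx
      · intro y hy
        obtain ⟨w, hw, hwy⟩ := hsub hy
        exact ⟨w, by rw [Set.mem_setOf_eq, hwy]; exact hy, hwy⟩
    refine ⟨t, {x : ↥(A ∪ C) | ↑x ∈ S}, ?_, ?_, ?_⟩
    · intro x hx
      obtain ⟨w, hw, hwx⟩ := hsub hx
      rwa [← (Subtype.ext hwx : w = x)]
    · intro x hx y hy hne hadj
      exact hind hx hy (fun h => hne (Subtype.ext h)) hadj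
    · conv_rhs => rw [← himg]
      exact (Set.ncard_image_of_injective _ Subtype.val_injective).symm
  | inr t =>
    refine le_trans ?_ (le_max_right _ _)
    apply le_csSup (bagAlpha_bddAbove _ _)
    have himg : Subtype.val '' {x : ↥(B ∪ C) | ↑x ∈ S} = S := by
      apply Set.Subset.antisymm
      · rintro _ ⟨x, hx, rfl⟩; exact hx
      · intro y hy
        obtain ⟨w, hw, hwy⟩ := hsub hy
        exact ⟨w, by rw [Set.mem_setOf_eq, hwy]; exact hy, hwy⟩
    refine ⟨t, {x : ↥(B ∪ C) | ↑x ∈ S}, ?_, ?_, ?_⟩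
    · intro x hx
      obtain ⟨w, hw, hwx⟩ := hsub hx
      rwa [← (Subtype.ext hwx : w = x)]
    · intro x hx y hy hne hadj
      exact hind hx hy (fun h => hne (Subtype.ext h)) hadj
    · conv_rhs => rw [← himg]
      exact (Set.ncard_image_of_injective _ Subtype.val_injective).symm

end Main

theorem stmt13 {V : Type} [Fintype V] (G : SimpleGraph V) (A B C : Set V)
    (hA : A.Nonempty) (hB : B.Nonempty)
    (hcover : A ∪ B ∪ C = Set.univ)
    (hAB : Disjoint A B) (hAC : Disjoint A C) (hBC : Disjoint B C)
    (hnoedge : ∀ a ∈ A, ∀ b ∈ B, ¬ G.Adj a b)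
    (hclique : G.IsClique C) :
    treeIndepNum G =
      max (treeIndepNum (G.induce (A ∪ C))) (treeIndepNum (G.induce (B ∪ C))) := by
  have : Finite V := Finite.of_fintype V
  apply le_antisymm
  · obtain ⟨tdA, hA'⟩ := exists_opt_td (G.induce (A ∪ C))
    obtain ⟨tdB, hB'⟩ := exists_opt_td (G.induce (B ∪ C))
    have hιA : Nonempty tdA.ι := ⟨(tdA.mem_bag ⟨hA.choose, Or.inl hA.choose_spec⟩).choose⟩
    have hιB : Nonempty tdB.ι := ⟨(tdB.mem_bag ⟨hB.choose, Or.inl hB.choose_spec⟩).choose⟩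
    have hcliqueA : (G.induce (A ∪ C)).IsClique {x : ↥(A ∪ C) | ↑x ∈ C} := by
      intro x hx y hy hne
      exact hclique hx hy (fun h => hne (Subtype.ext h))
    have hcliqueB : (G.induce (B ∪ C)).IsClique {x : ↥(B ∪ C) | ↑x ∈ C} := by
      intro x hx y hy hne
      exact hclique hx hy (fun h => hne (Subtype.ext h))
    obtain ⟨tA0, htA0⟩ := clique_in_bag tdA hιA (Set.toFinite _) hcliqueA
    obtain ⟨tB0, htB0⟩ := clique_in_bag tdB hιB (Set.toFinite _) hcliqueB
    calc treeIndepNum G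
        ≤ tdAlpha (glueTD G A B C hcover hAB hnoedge tdA tdB tA0 tB0
            (fun x hx => htA0 hx) (fun x hx => htB0 hx)) := Nat.sInf_le ⟨_, rfl⟩
      _ ≤ max (tdAlpha tdA) (tdAlpha tdB) :=
          tdAlpha_glueTD_le G A B C hcover hAB hnoedge tdA tdB tA0 tB0 _ _
      _ = _ := by rw [hA', hB']
  · exact max_le (treeIndepNum_induce_le G _) (treeIndepNum_induce_le G _)
end
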